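/- Let α ∈ ℝ and let f : (0,∞) → ℝ be twice differentiable. Set m̂_α(x) = e^x x^{−α−1} and g(x) = m̂_α(x)^{−1} f(x) = e^{−x} x^{α+1} f(x). Then for every x > 0, m̂_α(x) · [ x g''(x) + (x − α) g'(x) ] = −f(x) + x f''(x) + (−x + 2 + α) f'(x); that is, m̂_α ∘ L̂_α ∘ m̂_α^{−1} = −1 + L_{α+1}, where L̂_α = x d²/dx² + (x − α) d/dx is the Siegmund dual of L_α and L_{α+1} = x d²/dx² + (−x + 1 + (α+1)) d/dx. -/

import Mathlib

open Real

/-- The h-transform identity `m̂_α ∘ L̂_α ∘ m̂_α⁻¹ = -1 + L_{α+1}`,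
where `L̂_α = x d²/dx² + (x-α) d/dx`, `m̂_α(x) = eˣ x^{-α-1}` and
`L_{α+1} = x d²/dx² + (-x+2+α) d/dx`. -/
theorem stmt8 (α : ℝ) (f : ℝ → ℝ)
    (hf1 : ∀ x ∈ Set.Ioi (0 : ℝ), DifferentiableAt ℝ f x)
    (hf2 : ∀ x ∈ Set.Ioi (0 : ℝ), DifferentiableAt ℝ (deriv f) x) :
    ∀ x ∈ Set.Ioi (0 : ℝ),
      (Real.exp x * x ^ (-α - 1)) *
        (x * deriv (deriv fun t => Real.exp (-t) * t ^ (α + 1) * f t) x +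
          (x - α) * deriv (fun t => Real.exp (-t) * t ^ (α + 1) * f t) x) =
      -f x + x * deriv (deriv f) x + (-x + 2 + α) * deriv f x := by
  set D : ℝ → ℝ := fun t =>
    Real.exp (-t) * ((α + 1) * t ^ α * f t + t ^ (α + 1) * (deriv f t - f t)) with hDdef
  have hD : ∀ x ∈ Set.Ioi (0 : ℝ),
      HasDerivAt (fun t => Real.exp (-t) * t ^ (α + 1) * f t) (D x) x := by
    intro x hx
    have hx0 : x ≠ 0 := ne_of_gt hx
    have h1 : HasDerivAt (fun t : ℝ => Real.exp (-t)) (Real.exp (-x) * (-1)) x :=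
      (hasDerivAt_neg x).exp
    have h2 : HasDerivAt (fun t : ℝ => t ^ (α + 1)) ((α + 1) * x ^ (α + 1 - 1)) x :=
      Real.hasDerivAt_rpow_const (Or.inl hx0)
    have h3 : HasDerivAt f (deriv f x) x := (hf1 x hx).hasDerivAt
    have := (h1.mul h2).mul h3
    refine this.congr_deriv ?_
    rw [show α + 1 - 1 = α by ring]
    simp only [hDdef, Pi.mul_apply]
    ring
  intro x hx
  have hx0 : x ≠ 0 := ne_of_gt hx
  have hxpos : (0:ℝ) < x := hx
  -- first derivative
  have hd1 : deriv (fun t => Real.exp (-t) * t ^ (α + 1) * f t) x = D x := (hD x hx).deriv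
  -- second derivative
  have heq : deriv (fun t => Real.exp (-t) * t ^ (α + 1) * f t) =ᶠ[nhds x] D :=
    Filter.eventuallyEq_of_mem (Ioi_mem_nhds hxpos) (fun y hy => (hD y hy).deriv)
  have hd2 : deriv (deriv fun t => Real.exp (-t) * t ^ (α + 1) * f t) x = deriv D x :=
    heq.deriv_eq
  -- derivative of D
  have h1 : HasDerivAt (fun t : ℝ => Real.exp (-t)) (Real.exp (-x) * (-1)) x :=
    (hasDerivAt_neg x).exp
  have h3 : HasDerivAt f (deriv f x) x := (hf1 x hx).hasDerivAt
  have h4 : HasDerivAt (deriv f) (deriv (deriv f) x) x := (hf2 x hx).hasDerivAt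
  have hra : HasDerivAt (fun t : ℝ => t ^ α) (α * x ^ (α - 1)) x :=
    Real.hasDerivAt_rpow_const (Or.inl hx0)
  have hrb : HasDerivAt (fun t : ℝ => t ^ (α + 1)) ((α + 1) * x ^ (α + 1 - 1)) x :=
    Real.hasDerivAt_rpow_const (Or.inl hx0)
  have hA : HasDerivAt (fun t : ℝ => (α + 1) * t ^ α * f t)
      ((α + 1) * (α * x ^ (α - 1)) * f x + ((α + 1) * x ^ α) * deriv f x) x := by
    exact (hra.const_mul (α + 1)).mul h3
  have hB : HasDerivAt (fun t : ℝ => t ^ (α + 1) * (deriv f t - f t))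
      ((α + 1) * x ^ (α + 1 - 1) * (deriv f x - f x)
        + x ^ (α + 1) * (deriv (deriv f) x - deriv f x)) x :=
    hrb.mul (h4.sub h3)
  have hDder : HasDerivAt D
      (Real.exp (-x) * (-1) * ((α + 1) * x ^ α * f x + x ^ (α + 1) * (deriv f x - f x))
        + Real.exp (-x) * ((α + 1) * (α * x ^ (α - 1)) * f x + ((α + 1) * x ^ α) * deriv f x
          + ((α + 1) * x ^ (α + 1 - 1) * (deriv f x - f x)
            + x ^ (α + 1) * (deriv (deriv f) x - deriv f x)))) x :=
    h1.mul (hA.add hB)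
  rw [hd1, hd2, hDder.deriv]
  simp only [hDdef]
  -- now pure algebra with rpow identities
  have e1 : x ^ (α + 1) = x ^ α * x := Real.rpow_add_one hx0 α
  have e2 : x ^ (α - 1) = x ^ α / x := Real.rpow_sub_one hx0 α
  have e3 : x ^ (-α - 1) = (x ^ α * x)⁻¹ := by
    rw [show -α - 1 = -(α + 1) by ring, Real.rpow_neg (le_of_lt hxpos), e1]
  have hp : x ^ α ≠ 0 := (Real.rpow_pos_of_pos hxpos α).ne'
  rw [show α + 1 - 1 = α by ring, e1, e2, e3, Real.exp_neg]
  field_simp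
  ring
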